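/- Suppose all N ≥ 1 consumers have the linear valuation v_i(x) = α·x and the price is linear, p(g) = β·g + b, with α > b ≥ 0 and β > 0 (so C(g) = β·g² + b·g and C'(g) = 2β·g + b). Define the symmetric profiles ξ ∈ ℝ^N with ξ_i = (α − b)/(β(N+1)) for all i, and μ ∈ ℝ^N with μ_i = (α − b)/(2βN) for all i. Then: (a) ξ satisfies the Nash-equilibrium first-order conditions and μ satisfies the optimality first-order conditions; and (b) the efficiency ratio equals r(ξ, μ) = 4N/(N+1)², which tends to 0 as N → ∞; in particular the efficiency loss of the Nash equilibrium is arbitrarily large for large populations (the price of anarchy is zero). -/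

import Mathlib

open Finset Set

/-- With linear valuations `v_i(x) = α·x` and a linear price
`p(g) = β·g + b` (`α > b ≥ 0`, `β > 0`), the symmetric profiles
`ξ_i = (α−b)/(β(N+1))` and `μ_i = (α−b)/(2βN)` satisfy the Nash-equilibrium
and optimality first-order conditions respectively, the efficiency ratio
equals `4N/(N+1)²`, and this ratio tends to `0` as `N → ∞`. -/
theorem statement_3 (α β b : ℝ) (hb : 0 ≤ b) (hba : b < α) (hβ : 0 < β) :
    (∀ N : ℕ, 1 ≤ N →
      ((∀ _i : Fin N, 0 < (α - b) / (β * ((N : ℝ) + 1))) ∧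
       -- Nash-equilibrium first-order conditions for ξ (with v_i' ≡ α, p' ≡ β)
       (∀ i : Fin N,
          α = (β * (∑ _j : Fin N, (α - b) / (β * ((N : ℝ) + 1))) + b)
              + ((α - b) / (β * ((N : ℝ) + 1))) * β) ∧
       (∀ _i : Fin N, 0 < (α - b) / (2 * β * (N : ℝ))) ∧
       -- optimality first-order conditions for μ (with C'(g) = 2βg + b)
       (∀ i : Fin N,
          α = 2 * β * (∑ _j : Fin N, (α - b) / (2 * β * (N : ℝ))) + b) ∧
       -- the efficiency ratio equals 4N/(N+1)²
       ((∑ _i : Fin N, α * ((α - b) / (β * ((N : ℝ) + 1)))) -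
            (∑ _i : Fin N, (α - b) / (β * ((N : ℝ) + 1))) *
              (β * (∑ _i : Fin N, (α - b) / (β * ((N : ℝ) + 1))) + b)) /
         ((∑ _i : Fin N, α * ((α - b) / (2 * β * (N : ℝ)))) -
            (∑ _i : Fin N, (α - b) / (2 * β * (N : ℝ))) *
              (β * (∑ _i : Fin N, (α - b) / (2 * β * (N : ℝ))) + b))
        = 4 * (N : ℝ) / ((N : ℝ) + 1) ^ 2)) ∧
    Filter.Tendsto (fun N : ℕ => 4 * (N : ℝ) / ((N : ℝ) + 1) ^ 2)
      Filter.atTop (nhds 0) := by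
  constructor
  · intro N hN
    have hN0 : (0 : ℝ) < (N : ℝ) := by exact_mod_cast Nat.lt_of_lt_of_le Nat.zero_lt_one hN
    have hN1 : (0 : ℝ) < (N : ℝ) + 1 := by linarith
    have hab : 0 < α - b := by linarith
    have hβ' : β ≠ 0 := ne_of_gt hβ
    have hN0' : (N : ℝ) ≠ 0 := ne_of_gt hN0
    have hN1' : (N : ℝ) + 1 ≠ 0 := ne_of_gt hN1
    have hab' : α - b ≠ 0 := ne_of_gt hab
    refine ⟨fun _ => by positivity, fun _ => ?_, fun _ => by positivity, fun _ => ?_, ?_⟩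
    · simp only [Finset.sum_const, Finset.card_univ, Fintype.card_fin, nsmul_eq_mul]
      field_simp
      ring
    · simp only [Finset.sum_const, Finset.card_univ, Fintype.card_fin, nsmul_eq_mul]
      field_simp
      ring
    · simp only [Finset.sum_const, Finset.card_univ, Fintype.card_fin, nsmul_eq_mul]
      rw [div_eq_div_iff]
      · field_simp
        ring
      · have h2 : (N:ℝ) * (α * ((α - b) / (2 * β * (N : ℝ)))) -
            (N:ℝ) * ((α - b) / (2 * β * (N : ℝ))) *
              (β * ((N:ℝ) * ((α - b) / (2 * β * (N : ℝ)))) + b)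
            = (α - b)^2 / (4 * β) := by
          field_simp
          ring
        rw [h2]; positivity
      · positivity
  · have h4 : Filter.Tendsto (fun N : ℕ => 4 * (1 / ((N : ℝ) + 1)))
        Filter.atTop (nhds 0) := by
      simpa using (tendsto_one_div_add_atTop_nhds_zero_nat (𝕜 := ℝ)).const_mul 4
    refine squeeze_zero (fun n => by positivity) (fun n => ?_) h4
    have hn1 : (0:ℝ) < (n:ℝ) + 1 := by positivity
    rw [div_le_iff₀ (by positivity)]
    have key : 4 * (1/((n:ℝ)+1)) * ((n:ℝ)+1)^2 = 4*((n:ℝ)+1) := by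
      field_simp
    rw [key]; linarith
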